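/- Let T : ℓ∞/c₀ → ℓ∞/c₀ be a bounded linear operator which is a matrix operator (there exists a bounded linear operator R : ℓ∞ → ℓ∞ given by a c₀-matrix with Q ∘ R = T ∘ Q) and which is an isomorphic embedding (there exists M > 0 with ‖T x‖ ≥ M · ‖x‖ for all x ∈ ℓ∞/c₀). Then T is right-locally trivial: for every infinite A ⊆ ℕ there exist an infinite A₁ ⊆ A, an infinite B ⊆ ℕ, a nonzero real r, and a bijection σ : B → A₁ such that for every f ∈ ℓ∞ with f n = 0 for all n ∉ A₁ and every g ∈ ℓ∞ with Q g = T (Q f), for every ε > 0 the set {n ∈ B : |g n − r · f (σ n)| ≥ ε} is finite. -/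

import Mathlib

open Filter Topology

noncomputable section

/-- The Banach space `ℓ∞` of bounded real sequences with the sup norm. -/
abbrev ellInfty : Type := BoundedContinuousFunction ℕ ℝ

/-- `c₀`, the subspace of `ℓ∞` of sequences converging to `0`. -/
def czero : Submodule ℝ ellInfty where
  carrier := {f | Tendsto (⇑f) atTop (𝓝 (0 : ℝ))}
  add_mem' := by
    intro a b ha hb
    first
      | simpa [Pi.add_def] using ha.add hb
      | (have h := ha.add hb; rw [add_zero] at h; exact h)
  zero_mem' := by
    show Tendsto _ _ _
    simp only [BoundedContinuousFunction.coe_zero]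
    exact tendsto_const_nhds
  smul_mem' := by intro c f hf; simpa using hf.const_mul c

/-- The quotient Banach space `ℓ∞/c₀`; `czero.mkQ : ℓ∞ → ℓ∞/c₀` is the quotient map. -/
abbrev ellInftyModCzero : Type := ellInfty ⧸ czero

/-- A bounded operator `T` on `ℓ∞/c₀` is *locally null* if for every infinite `A ⊆ ℕ`
there is an infinite `A₁ ⊆ A` such that `T (Q f) = 0` for every `f ∈ ℓ∞` vanishing
outside of `A₁`. -/
def LocallyNull (T : ellInftyModCzero →L[ℝ] ellInftyModCzero) : Prop :=
  ∀ A : Set ℕ, A.Infinite → ∃ A₁ ⊆ A, A₁.Infinite ∧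
    ∀ f : ellInfty, (∀ n ∉ A₁, f n = 0) → T (czero.mkQ f) = 0

/-- `R : ℓ∞ → ℓ∞` is given by the `c₀`-matrix `b`: the rows of `b` are absolutely summable
with uniformly bounded `ℓ₁`-norms, the columns of `b` converge to `0`, and `R` acts by
matrix multiplication by `b`. -/
structure IsC0Matrix (R : ellInfty →L[ℝ] ellInfty) (b : ℕ → ℕ → ℝ) : Prop where
  rows_summable : ∀ i, Summable fun j => |b i j|
  rows_bounded : ∃ C : ℝ, ∀ i, (∑' j, |b i j|) ≤ C
  cols_vanish : ∀ j, Tendsto (fun i => b i j) atTop (𝓝 (0 : ℝ))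
  matrix_repr : ∀ f : ellInfty, ∀ i, R f i = ∑' j, b i j * f j

/-- `T` is *right-locally trivial*: for every infinite `A ⊆ ℕ` there are an infinite
`A₁ ⊆ A`, an infinite `B ⊆ ℕ`, a nonzero real `r` and a bijection `σ : B → A₁` such that
for every `f` supported in `A₁` and every representative `g` of `T [f]`, the sequence
`g` agrees with `r·(f ∘ σ)` on `B` up to a sequence converging to `0`. -/
def RightLocallyTrivial (T : ellInftyModCzero →L[ℝ] ellInftyModCzero) : Prop :=
  ∀ A : Set ℕ, A.Infinite → ∃ A₁ ⊆ A, A₁.Infinite ∧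
    ∃ B : Set ℕ, B.Infinite ∧ ∃ r : ℝ, r ≠ 0 ∧ ∃ σ : ℕ → ℕ, Set.BijOn σ B A₁ ∧
      ∀ f : ellInfty, (∀ n ∉ A₁, f n = 0) →
        ∀ g : ellInfty, czero.mkQ g = T (czero.mkQ f) →
          ∀ ε : ℝ, 0 < ε → {n | n ∈ B ∧ ε ≤ |g n - r * f (σ n)|}.Finite

namespace Stmt12Aux
attribute [local instance] Classical.propDecidable

/-- row mass of `b` at row `i` over the set `S` -/
def tt (b : ℕ → ℕ → ℝ) (i : ℕ) (S : Set ℕ) : ℝ := ∑' j, S.indicator (fun j => |b i j|) j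

variable {b : ℕ → ℕ → ℝ}

lemma ind_nonneg (i : ℕ) (S : Set ℕ) (j : ℕ) : 0 ≤ S.indicator (fun j => |b i j|) j :=
  Set.indicator_nonneg (fun _ _ => abs_nonneg _) j

lemma summable_ind (hsum : ∀ i, Summable fun j => |b i j|) (i : ℕ) (S : Set ℕ) :
    Summable (S.indicator (fun j => |b i j|)) := (hsum i).indicator S

lemma tt_nonneg (i : ℕ) (S : Set ℕ) : 0 ≤ tt b i S := tsum_nonneg (ind_nonneg i S)

lemma tt_mono (hsum : ∀ i, Summable fun j => |b i j|) {S S' : Set ℕ} (h : S ⊆ S') (i : ℕ) :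
    tt b i S ≤ tt b i S' :=
  Summable.tsum_le_tsum
    (fun j => Set.indicator_le_indicator_of_subset h (fun j => abs_nonneg _) j)
    (summable_ind hsum i S) (summable_ind hsum i S')

lemma tt_le_row (hsum : ∀ i, Summable fun j => |b i j|) (i : ℕ) (S : Set ℕ) :
    tt b i S ≤ ∑' j, |b i j| :=
  Summable.tsum_le_tsum (fun j => Set.indicator_le_self' (fun _ _ => abs_nonneg _) j)
    (summable_ind hsum i S) (hsum i)

lemma tt_union_le (hsum : ∀ i, Summable fun j => |b i j|) (i : ℕ) (X Y : Set ℕ) :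
    tt b i (X ∪ Y) ≤ tt b i X + tt b i Y := by
  have hpt : ∀ j, (X ∪ Y).indicator (fun j => |b i j|) j ≤
      X.indicator (fun j => |b i j|) j + Y.indicator (fun j => |b i j|) j := by
    intro j
    by_cases hX : j ∈ X <;> by_cases hY : j ∈ Y <;>
      simp [Set.indicator_apply, hX, hY, abs_nonneg]
  calc tt b i (X ∪ Y) ≤ ∑' j, (X.indicator (fun j => |b i j|) j + Y.indicator (fun j => |b i j|) j) :=
        Summable.tsum_le_tsum hpt (summable_ind hsum i _) ((summable_ind hsum i X).add (summable_ind hsum i Y))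
    _ = tt b i X + tt b i Y := Summable.tsum_add (summable_ind hsum i X) (summable_ind hsum i Y)

lemma tt_split (hsum : ∀ i, Summable fun j => |b i j|) (i : ℕ) {S : Set ℕ} {a : ℕ} (ha : a ∈ S) :
    tt b i S = |b i a| + tt b i (S \ {a}) := by
  have key : ∀ j, S.indicator (fun j => |b i j|) j =
      ({a} : Set ℕ).indicator (fun j => |b i j|) j + (S \ {a}).indicator (fun j => |b i j|) j := by
    intro j
    by_cases hj : j = a
    · subst hj; simp [Set.indicator_apply, ha]
    · by_cases hjS : j ∈ S <;> simp [Set.indicator_apply, hj, hjS]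
  rw [tt, tsum_congr key, Summable.tsum_add (summable_ind hsum i {a}) (summable_ind hsum i (S \ {a}))]
  congr 1
  rw [tsum_eq_single a (fun j hj => Set.indicator_of_notMem (by simp [hj]) _)]
  simp

lemma single_le_tt (hsum : ∀ i, Summable fun j => |b i j|) (i : ℕ) {S : Set ℕ} {a : ℕ}
    (ha : a ∈ S) : |b i a| ≤ tt b i S := by
  rw [tt_split hsum i ha]
  linarith [tt_nonneg (b := b) i (S \ {a})]

lemma finsum_tendsto (hcol : ∀ j, Tendsto (fun i => b i j) atTop (𝓝 (0:ℝ))) (F : Finset ℕ) :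
    Tendsto (fun i => ∑ j ∈ F, |b i j|) atTop (𝓝 0) := by
  have h := tendsto_finset_sum F (fun j (_ : j ∈ F) => (hcol j).abs)
  simpa using h

/-- the set of "eventual upper bounds along an infinite subset of `A`" -/
def Dset (b : ℕ → ℕ → ℝ) (A : Set ℕ) : Set ℝ :=
  {d | ∃ S, S ⊆ A ∧ S.Infinite ∧ ∃ N, ∀ i ≥ N, tt b i S ≤ d}

def mu (b : ℕ → ℕ → ℝ) (A : Set ℕ) : ℝ := sInf (Dset b A)

lemma Dset_nonneg {A : Set ℕ} {d : ℝ} (hd : d ∈ Dset b A) : 0 ≤ d := by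
  obtain ⟨S, _, _, N, h⟩ := hd
  exact (tt_nonneg N S).trans (h N le_rfl)

lemma Dset_bddBelow (A : Set ℕ) : BddBelow (Dset b A) :=
  ⟨0, fun d hd => Dset_nonneg hd⟩

lemma C_mem_Dset {C : ℝ} (hsum : ∀ i, Summable fun j => |b i j|)
    (hC : ∀ i, (∑' j, |b i j|) ≤ C) {A : Set ℕ} (hA : A.Infinite) : C ∈ Dset b A :=
  ⟨A, subset_rfl, hA, 0, fun i _ => (tt_le_row hsum i A).trans (hC i)⟩

lemma mu_mono (hsum : ∀ i, Summable fun j => |b i j|) {C : ℝ}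
    (hC : ∀ i, (∑' j, |b i j|) ≤ C) {A A' : Set ℕ} (hA' : A'.Infinite) (h : A' ⊆ A) :
    mu b A ≤ mu b A' := by
  apply csInf_le_csInf (Dset_bddBelow A) ⟨C, C_mem_Dset hsum hC hA'⟩
  rintro d ⟨S, hS, hSinf, N, hN⟩
  exact ⟨S, hS.trans h, hSinf, N, hN⟩

lemma mu_le_C (hsum : ∀ i, Summable fun j => |b i j|) {C : ℝ}
    (hC : ∀ i, (∑' j, |b i j|) ≤ C) {A : Set ℕ} (hA : A.Infinite) : mu b A ≤ C :=
  csInf_le (Dset_bddBelow A) (C_mem_Dset hsum hC hA)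




variable {b : ℕ → ℕ → ℝ}

/-- choose the next element of the thin subset -/
def nextEl (b : ℕ → ℕ → ℝ) (ε : ℝ) (S : Set ℕ) (E : Finset ℕ) (m : ℕ) : ℕ :=
  if h : ∃ s, s ∈ S ∧ E.sup id < s ∧
      ∀ i, ε ≤ ∑ j ∈ E, |b i j| → |b i s| ≤ ε * (1/2) ^ (m + 1) then h.choose else 0

def EE (b : ℕ → ℕ → ℝ) (ε : ℝ) (S : Set ℕ) : ℕ → Finset ℕ
  | 0 => ∅
  | m + 1 => EE b ε S m ∪ {nextEl b ε S (EE b ε S m) m}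

def sel (b : ℕ → ℕ → ℝ) (ε : ℝ) (S : Set ℕ) (m : ℕ) : ℕ :=
  nextEl b ε S (EE b ε S m) m

lemma nextEl_exists (hsum : ∀ i, Summable fun j => |b i j|)
    (hcol : ∀ j, Tendsto (fun i => b i j) atTop (𝓝 (0:ℝ))) {S : Set ℕ} (hS : S.Infinite)
    {ε : ℝ} (hε : 0 < ε) (E : Finset ℕ) (m : ℕ) :
    ∃ s, s ∈ S ∧ E.sup id < s ∧
      ∀ i, ε ≤ ∑ j ∈ E, |b i j| → |b i s| ≤ ε * (1/2) ^ (m + 1) := by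
  have hpos : 0 < ε * (1/2) ^ (m+1) := by positivity
  have h0 : Tendsto (fun i => ∑ j ∈ E, |b i j|) atTop (𝓝 0) := finsum_tendsto hcol E
  have h1 : ∀ᶠ i in atTop, (∑ j ∈ E, |b i j|) < ε :=
    h0.eventually (eventually_lt_nhds hε)
  obtain ⟨N0, hN0⟩ := eventually_atTop.mp h1
  have h2 : ∀ᶠ (j : ℕ) in atTop, ∀ i ∈ Finset.range N0, |b i j| ≤ ε * (1/2) ^ (m+1) := by
    rw [eventually_all_finset]
    intro i _
    have ht : Tendsto (fun j => |b i j|) atTop (𝓝 0) := (hsum i).tendsto_atTop_zero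
    exact ht.eventually (eventually_le_nhds hpos)
  obtain ⟨J, hJ⟩ := eventually_atTop.mp h2
  obtain ⟨s, hsS, hs⟩ := hS.exists_gt (max (E.sup id) J)
  refine ⟨s, hsS, lt_of_le_of_lt (le_max_left _ _) hs, fun i hi => ?_⟩
  have hiN0 : i < N0 := by
    by_contra hcon
    exact absurd (hN0 i (le_of_not_gt hcon)) (not_lt.mpr hi)
  exact hJ s (le_of_lt (lt_of_le_of_lt (le_max_right _ _) hs)) i (Finset.mem_range.mpr hiN0)

lemma sel_spec (hsum : ∀ i, Summable fun j => |b i j|)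
    (hcol : ∀ j, Tendsto (fun i => b i j) atTop (𝓝 (0:ℝ))) {S : Set ℕ} (hS : S.Infinite)
    {ε : ℝ} (hε : 0 < ε) (m : ℕ) :
    sel b ε S m ∈ S ∧ (EE b ε S m).sup id < sel b ε S m ∧
      ∀ i, ε ≤ ∑ j ∈ EE b ε S m, |b i j| → |b i (sel b ε S m)| ≤ ε * (1/2) ^ (m + 1) := by
  have h := nextEl_exists hsum hcol hS hε (EE b ε S m) m
  rw [sel, nextEl, dif_pos h]
  exact h.choose_spec

lemma sel_not_mem_EE (hsum : ∀ i, Summable fun j => |b i j|)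
    (hcol : ∀ j, Tendsto (fun i => b i j) atTop (𝓝 (0:ℝ))) {S : Set ℕ} (hS : S.Infinite)
    {ε : ℝ} (hε : 0 < ε) (m : ℕ) : sel b ε S m ∉ EE b ε S m := by
  intro hmem
  have h1 : sel b ε S m ≤ (EE b ε S m).sup id := Finset.le_sup (f := id) hmem
  exact absurd h1 (not_le.mpr (sel_spec hsum hcol hS hε m).2.1)

lemma EE_mono (ε : ℝ) (S : Set ℕ) : Monotone (EE b ε S) := by
  apply monotone_nat_of_le_succ
  intro m
  rw [show EE b ε S (m+1) = EE b ε S m ∪ {nextEl b ε S (EE b ε S m) m} from rfl]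
  exact Finset.subset_union_left

lemma sel_strictMono (hsum : ∀ i, Summable fun j => |b i j|)
    (hcol : ∀ j, Tendsto (fun i => b i j) atTop (𝓝 (0:ℝ))) {S : Set ℕ} (hS : S.Infinite)
    {ε : ℝ} (hε : 0 < ε) : StrictMono (sel b ε S) := by
  apply strictMono_nat_of_lt_succ
  intro m
  have h1 : sel b ε S m ∈ EE b ε S (m+1) := by
    rw [show EE b ε S (m+1) = EE b ε S m ∪ {sel b ε S m} from rfl]
    simp
  calc sel b ε S m ≤ (EE b ε S (m+1)).sup id := Finset.le_sup (f := id) h1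
    _ < sel b ε S (m+1) := (sel_spec hsum hcol hS hε (m+1)).2.1

lemma sel_mem_EE_of_lt (ε : ℝ) (S : Set ℕ) {l m : ℕ} (h : l < m) :
    sel b ε S l ∈ EE b ε S m := by
  have h1 : sel b ε S l ∈ EE b ε S (l+1) := by
    rw [show EE b ε S (l+1) = EE b ε S l ∪ {sel b ε S l} from rfl]
    simp
  exact EE_mono ε S h h1

lemma EE_sum_le (hsum : ∀ i, Summable fun j => |b i j|)
    (hcol : ∀ j, Tendsto (fun i => b i j) atTop (𝓝 (0:ℝ))) {S : Set ℕ} (hS : S.Infinite)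
    {ε : ℝ} (hε : 0 < ε) {β : ℝ} (hβ : 0 ≤ β) {N : ℕ}
    (hb : ∀ i ≥ N, ∀ j ∈ S, |b i j| ≤ β) :
    ∀ i ≥ N, ∀ m, (∑ j ∈ EE b ε S m, |b i j|) ≤ β + ε + ε * (1 - (1/2) ^ m) := by
  intro i hi
  intro m
  induction m with
  | zero => simp [EE]; linarith
  | succ m ih =>
    have hnot : sel b ε S m ∉ EE b ε S m := sel_not_mem_EE hsum hcol hS hε m
    have hsplit : (∑ j ∈ EE b ε S (m+1), |b i j|)
        = (∑ j ∈ EE b ε S m, |b i j|) + |b i (sel b ε S m)| := by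
      rw [show EE b ε S (m+1) = EE b ε S m ∪ {sel b ε S m} from rfl,
        Finset.sum_union (Finset.disjoint_singleton_right.mpr hnot), Finset.sum_singleton]
    have hselS : sel b ε S m ∈ S := (sel_spec hsum hcol hS hε m).1
    have hβb : |b i (sel b ε S m)| ≤ β := hb i hi _ hselS
    have hpow : (0:ℝ) < (1/2 : ℝ) ^ m := by positivity
    have hpow1 : ((1:ℝ)/2) ^ (m+1) = (1/2) * (1/2)^m := by ring
    by_cases hcase : ε ≤ ∑ j ∈ EE b ε S m, |b i j|
    · have hsmall := (sel_spec hsum hcol hS hε m).2.2 i hcase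
      rw [hsplit]
      rw [hpow1] at hsmall ⊢
      nlinarith
    · push_neg at hcase
      rw [hsplit]
      have : (0:ℝ) ≤ ε * (1 - (1/2) ^ (m+1)) := by
        have : ((1:ℝ)/2) ^ (m+1) ≤ 1 := by
          apply pow_le_one₀ <;> norm_num
        nlinarith
      linarith

/-- The key "thin subset" construction: if all entries over `S` (for large rows) are at
most `β`, then some infinite subset of `S` has all row masses at most `β + 2ε`. -/
lemma exists_thin_subset (hsum : ∀ i, Summable fun j => |b i j|)
    (hcol : ∀ j, Tendsto (fun i => b i j) atTop (𝓝 (0:ℝ))) {S : Set ℕ} (hS : S.Infinite)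
    {ε : ℝ} (hε : 0 < ε) {β : ℝ} (hβ : 0 ≤ β) {N : ℕ}
    (hb : ∀ i ≥ N, ∀ j ∈ S, |b i j| ≤ β) :
    ∃ S', S' ⊆ S ∧ S'.Infinite ∧ ∀ i ≥ N, tt b i S' ≤ β + 2 * ε := by
  refine ⟨Set.range (sel b ε S), ?_, ?_, ?_⟩
  · rintro x ⟨m, rfl⟩
    exact (sel_spec hsum hcol hS hε m).1
  · exact Set.infinite_range_of_injective (sel_strictMono hsum hcol hS hε).injective
  · intro i hi
    apply Summable.tsum_le_of_sum_le (summable_ind hsum i _)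
    intro F
    set M := F.sup id + 1 with hM
    have hsub : F.filter (· ∈ Set.range (sel b ε S)) ⊆ EE b ε S M := by
      intro j hj
      rw [Finset.mem_filter] at hj
      obtain ⟨hjF, l, hl⟩ := hj
      have hlle : l ≤ F.sup id := by
        calc l ≤ sel b ε S l := (sel_strictMono hsum hcol hS hε).le_apply
          _ = j := hl
          _ ≤ F.sup id := Finset.le_sup (f := id) hjF
      rw [← hl]
      exact sel_mem_EE_of_lt ε S (Nat.lt_succ_of_le hlle)
    have h1 : (∑ j ∈ F, (Set.range (sel b ε S)).indicator (fun j => |b i j|) j)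
        = ∑ j ∈ F.filter (· ∈ Set.range (sel b ε S)), |b i j| := by
      rw [Finset.sum_filter]
      apply Finset.sum_congr rfl
      intro j _
      by_cases h : j ∈ Set.range (sel b ε S) <;> simp [Set.indicator_apply, h]
    rw [h1]
    have h2 : (∑ j ∈ F.filter (· ∈ Set.range (sel b ε S)), |b i j|) ≤ ∑ j ∈ EE b ε S M, |b i j| :=
      Finset.sum_le_sum_of_subset_of_nonneg hsub (fun j _ _ => abs_nonneg _)
    have h3 := EE_sum_le hsum hcol hS hε hβ hb i hi M
    have h4 : ε * (1 - (1/2:ℝ) ^ M) ≤ ε := by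
      have : (0:ℝ) ≤ (1/2:ℝ) ^ M := by positivity
      nlinarith
    linarith



lemma entry_large (hsum : ∀ i, Summable fun j => |b i j|)
    (hcol : ∀ j, Tendsto (fun i => b i j) atTop (𝓝 (0:ℝ))) {A S : Set ℕ} (hSA : S ⊆ A)
    (hS : S.Infinite) {ε : ℝ} (hε : 0 < ε) (N : ℕ) :
    ∃ i, N ≤ i ∧ ∃ j ∈ S, mu b A - 3 * ε < |b i j| := by
  by_contra hcon
  push_neg at hcon
  have hβ0 : 0 ≤ mu b A - 3 * ε := by
    obtain ⟨j, hj⟩ := hS.nonempty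
    exact (abs_nonneg _).trans (hcon N le_rfl j hj)
  obtain ⟨S', hsub, hinf, hbd⟩ := exists_thin_subset hsum hcol hS hε hβ0
    (fun i hi j hj => hcon i hi j hj)
  have hmem : (mu b A - ε) ∈ Dset b A := by
    refine ⟨S', hsub.trans hSA, hinf, N, fun i hi => ?_⟩
    have := hbd i hi
    linarith
  have := csInf_le (Dset_bddBelow A) hmem
  have hmu : mu b A ≤ mu b A - ε := this
  linarith

/-- the state of the recursive construction -/
structure GS where
  S : Set ℕ
  hS : S.Infinite
  n : ℕ
  a : ℕ
  F : Finset ℕ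

def eps (k : ℕ) : ℝ := (1/2) ^ k

lemma eps_pos (k : ℕ) : 0 < eps k := by rw [eps]; positivity

lemma eps_tendsto : Tendsto eps atTop (𝓝 0) := by
  apply tendsto_pow_atTop_nhds_zero_of_lt_one <;> norm_num

lemma step_ex (hsum : ∀ i, Summable fun j => |b i j|) {C : ℝ}
    (hC : ∀ i, (∑' j, |b i j|) ≤ C)
    (hcol : ∀ j, Tendsto (fun i => b i j) atTop (𝓝 (0:ℝ))) (k : ℕ) (st : GS) :
    ∃ st' : GS, st'.S ⊆ st.S ∧ st'.a ∈ st.S ∧ st'.a ∉ st'.S ∧ st.n < st'.n ∧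
      st'.F = st.F ∪ {st'.a} ∧
      mu b st.S - 3 * eps k < |b st'.n st'.a| ∧ |b st'.n st'.a| ≤ mu b st.S + eps k ∧
      tt b st'.n st'.S ≤ 4 * eps k ∧ (∑ j ∈ st.F, |b st'.n j|) ≤ eps k := by
  have hne : (Dset b st.S).Nonempty := ⟨C, C_mem_Dset hsum hC st.hS⟩
  have hlt : mu b st.S < mu b st.S + eps k := by linarith [eps_pos k]
  obtain ⟨d, hd, hdlt⟩ := (csInf_lt_iff (Dset_bddBelow _) hne).mp hlt
  obtain ⟨S₁, hS₁sub, hS₁inf, N₁, hN₁⟩ := hd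
  have h2 : ∀ᶠ i in atTop, (∑ j ∈ st.F, |b i j|) ≤ eps k :=
    (finsum_tendsto hcol st.F).eventually (eventually_le_nhds (eps_pos k))
  obtain ⟨N₂, hN₂⟩ := eventually_atTop.mp h2
  obtain ⟨i, hiN, j, hjS₁, hjlt⟩ :=
    entry_large hsum hcol hS₁sub hS₁inf (eps_pos k) (max (st.n + 1) (max N₁ N₂))
  have hiN₁ : N₁ ≤ i := le_trans (le_trans (le_max_left _ _) (le_max_right _ _)) hiN
  have hiN₂ : N₂ ≤ i := le_trans (le_trans (le_max_right _ _) (le_max_right _ _)) hiN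
  have hin : st.n < i := lt_of_lt_of_le (Nat.lt_succ_self _) (le_trans (le_max_left _ _) hiN)
  have hup : |b i j| ≤ mu b st.S + eps k :=
    le_trans (le_trans (single_le_tt hsum i hjS₁) (hN₁ i hiN₁)) (le_of_lt hdlt)
  have hsplit := tt_split hsum i hjS₁
  have htail : tt b i (S₁ \ {j}) ≤ 4 * eps k := by
    have h1 : tt b i S₁ ≤ mu b st.S + eps k := le_trans (hN₁ i hiN₁) (le_of_lt hdlt)
    have h2 := hjlt
    have h3 : mu b st.S ≤ mu b S₁ := mu_mono hsum hC hS₁inf hS₁sub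
    -- hjlt : mu b S₁ - 3 * eps k < |b i j|
    linarith
  refine ⟨⟨S₁ \ {j}, hS₁inf.diff (Set.finite_singleton j), i, j, st.F ∪ {j}⟩,
    (Set.diff_subset.trans hS₁sub), hS₁sub hjS₁, by simp, hin, rfl, ?_, hup, htail,
    hN₂ i hiN₂⟩
  have h3 : mu b st.S ≤ mu b S₁ := mu_mono hsum hC hS₁inf hS₁sub
  have := hjlt
  simp only []
  linarith

lemma tt_coe_finset (i : ℕ) (F : Finset ℕ) : tt b i ↑F = ∑ j ∈ F, |b i j| := by
  rw [tt, tsum_eq_sum (s := F) (fun j hj => Set.indicator_of_notMem (by simpa using hj) _)]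
  exact Finset.sum_congr rfl (fun j hj => Set.indicator_of_mem (by simpa using hj) _)

def chain (b : ℕ → ℕ → ℝ) {C : ℝ} (hsum : ∀ i, Summable fun j => |b i j|)
    (hC : ∀ i, (∑' j, |b i j|) ≤ C)
    (hcol : ∀ j, Tendsto (fun i => b i j) atTop (𝓝 (0:ℝ))) (A : Set ℕ) (hA : A.Infinite) :
    ℕ → GS
  | 0 => ⟨A, hA, 0, 0, ∅⟩
  | k + 1 => (step_ex hsum hC hcol k (chain b hsum hC hcol A hA k)).choose

lemma chain_spec (b : ℕ → ℕ → ℝ) {C : ℝ} (hsum : ∀ i, Summable fun j => |b i j|)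
    (hC : ∀ i, (∑' j, |b i j|) ≤ C)
    (hcol : ∀ j, Tendsto (fun i => b i j) atTop (𝓝 (0:ℝ))) (A : Set ℕ) (hA : A.Infinite)
    (k : ℕ) :
    (chain b hsum hC hcol A hA (k+1)).S ⊆ (chain b hsum hC hcol A hA k).S ∧
    (chain b hsum hC hcol A hA (k+1)).a ∈ (chain b hsum hC hcol A hA k).S ∧
    (chain b hsum hC hcol A hA (k+1)).a ∉ (chain b hsum hC hcol A hA (k+1)).S ∧
    (chain b hsum hC hcol A hA k).n < (chain b hsum hC hcol A hA (k+1)).n ∧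
    (chain b hsum hC hcol A hA (k+1)).F
      = (chain b hsum hC hcol A hA k).F ∪ {(chain b hsum hC hcol A hA (k+1)).a} ∧
    mu b (chain b hsum hC hcol A hA k).S - 3 * eps k
      < |b (chain b hsum hC hcol A hA (k+1)).n (chain b hsum hC hcol A hA (k+1)).a| ∧
    |b (chain b hsum hC hcol A hA (k+1)).n (chain b hsum hC hcol A hA (k+1)).a|
      ≤ mu b (chain b hsum hC hcol A hA k).S + eps k ∧
    tt b (chain b hsum hC hcol A hA (k+1)).n (chain b hsum hC hcol A hA (k+1)).S ≤ 4 * eps k ∧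
    (∑ j ∈ (chain b hsum hC hcol A hA k).F,
      |b (chain b hsum hC hcol A hA (k+1)).n j|) ≤ eps k := by
  rw [show chain b hsum hC hcol A hA (k+1)
      = (step_ex hsum hC hcol k (chain b hsum hC hcol A hA k)).choose from by rw [chain]]
  exact (step_ex hsum hC hcol k (chain b hsum hC hcol A hA k)).choose_spec



/-- the indicator function of `S` as an element of `ℓ∞` -/
def indF (S : Set ℕ) : ellInfty :=
  BoundedContinuousFunction.ofNormedAddCommGroup (S.indicator 1)
    continuous_of_discreteTopology 1
    (by intro x; by_cases h : x ∈ S <;> simp [Set.indicator_apply, h])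

lemma indF_apply (S : Set ℕ) (n : ℕ) : indF S n = if n ∈ S then 1 else 0 := by
  have : indF S n = S.indicator 1 n := by
    simp [indF]
  rw [this, Set.indicator_apply]
  by_cases h : n ∈ S <;> simp [h]

lemma mkQ_norm_le (g : ellInfty) {d : ℝ} (hd : 0 ≤ d) (N : ℕ) (h : ∀ i ≥ N, |g i| ≤ d) :
    ‖czero.mkQ g‖ ≤ d := by
  set h' : ellInfty := BoundedContinuousFunction.ofNormedAddCommGroup
    (fun m => if m < N then g m else 0) continuous_of_discreteTopology ‖g‖
    (fun x => by
      by_cases hx : x < N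
      · simpa [hx] using g.norm_coe_le_norm x
      · simp [hx]) with hdef
  have hcoe : ∀ m, h' m = if m < N then g m else 0 := fun m => by
    simp [hdef, BoundedContinuousFunction.coe_ofNormedAddCommGroup]
  have hmem : h' ∈ czero := by
    show Tendsto _ atTop (𝓝 (0:ℝ))
    refine Tendsto.congr' ?_ tendsto_const_nhds
    filter_upwards [eventually_ge_atTop N] with m hm
    rw [hcoe m, if_neg (by omega)]
  have heq : czero.mkQ g = czero.mkQ (g - h') := by
    rw [Submodule.mkQ_apply, Submodule.mkQ_apply]
    rw [Submodule.Quotient.eq]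
    simpa using hmem
  rw [heq, Submodule.mkQ_apply]
  refine le_trans (Submodule.Quotient.norm_mk_le _ _) ?_
  rw [BoundedContinuousFunction.norm_le hd]
  intro m
  have hval : (g - h') m = g m - h' m := by
    rw [BoundedContinuousFunction.coe_sub]; rfl
  rw [hval]
  by_cases hm : m < N
  · simp [hcoe m, hm, hd]
  · have := h m (by omega)
    rw [hcoe m, if_neg hm]
    simpa using this

lemma one_le_norm_indF {S : Set ℕ} (hS : S.Infinite) : 1 ≤ ‖czero.mkQ (indF S)‖ := by
  by_contra hlt
  push_neg at hlt
  obtain ⟨y, hy, hylt⟩ := Submodule.Quotient.norm_mk_lt (czero.mkQ (indF S))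
    (show (0:ℝ) < 1 - ‖czero.mkQ (indF S)‖ by linarith)
  have h1 : ‖y‖ < 1 := by linarith
  have hmem : y - indF S ∈ czero := by
    rw [← Submodule.Quotient.eq]
    rw [hy, Submodule.mkQ_apply]
  have htend : Tendsto (fun m => y m - indF S m) atTop (𝓝 (0:ℝ)) := by
    have := (show Tendsto (⇑(y - indF S)) atTop (𝓝 (0:ℝ)) from hmem)
    exact this
  set ρ := (1 - ‖y‖) / 2 with hρ
  have hρpos : 0 < ρ := by rw [hρ]; linarith
  have hev : ∀ᶠ m in atTop, ‖y m - indF S m‖ < ρ := by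
    have h' : Tendsto (fun m => ‖y m - indF S m‖) atTop (𝓝 (0:ℝ)) := by simpa using htend.norm
    exact h'.eventually (eventually_lt_nhds hρpos)
  obtain ⟨N, hN⟩ := eventually_atTop.mp hev
  obtain ⟨m, hmS, hm⟩ := hS.exists_gt N
  have hind : indF S m = 1 := by rw [indF_apply, if_pos hmS]
  have h2 : ‖y m - 1‖ < ρ := by rw [← hind]; exact hN m (le_of_lt hm)
  have h3 : |y m| ≤ ‖y‖ := y.norm_coe_le_norm m
  have h4 : 1 - ρ ≤ |y m| := by
    have h5 : |(1:ℝ)| - |y m| ≤ |1 - y m| := abs_sub_abs_le_abs_sub 1 (y m)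
    rw [abs_one, abs_sub_comm] at h5
    rw [Real.norm_eq_abs] at h2
    linarith
  rw [hρ] at h4
  linarith

variable {b : ℕ → ℕ → ℝ}

lemma summable_row_mul (hsum : ∀ i, Summable fun j => |b i j|) (i : ℕ) (f : ellInfty) :
    Summable (fun j => b i j * f j) := by
  rw [← summable_abs_iff]
  apply Summable.of_nonneg_of_le (fun j => abs_nonneg _) (fun j => ?_) ((hsum i).mul_right ‖f‖)
  rw [abs_mul]
  have h5 := f.norm_coe_le_norm j
  rw [Real.norm_eq_abs] at h5
  exact mul_le_mul_of_nonneg_left h5 (abs_nonneg _)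

lemma abs_le_norm_bcf (f : ellInfty) (j : ℕ) : |f j| ≤ ‖f‖ := by
  have h5 := f.norm_coe_le_norm j
  rwa [Real.norm_eq_abs] at h5

lemma repr_err (hsum : ∀ i, Summable fun j => |b i j|) (i a : ℕ) (A₁ : Set ℕ) (f : ellInfty)
    (hf : ∀ n ∉ A₁, f n = 0) :
    |(∑' j, b i j * f j) - b i a * f a| ≤ ‖f‖ * tt b i (A₁ \ {a}) := by
  have hsf := summable_row_mul hsum i f
  rw [Summable.tsum_eq_add_tsum_ite hsf a, add_sub_cancel_left]
  have hbound : ∀ j, ‖(if j = a then 0 else b i j * f j)‖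
      ≤ ‖f‖ * (A₁ \ {a}).indicator (fun j => |b i j|) j := by
    intro j
    by_cases hj : j = a
    · rw [if_pos hj]
      simp only [norm_zero]
      exact mul_nonneg (norm_nonneg f) (ind_nonneg i _ j)
    · rw [if_neg hj, Real.norm_eq_abs, abs_mul]
      by_cases hjA : j ∈ A₁
      · rw [Set.indicator_of_mem (by exact ⟨hjA, by simpa using hj⟩)]
        calc |b i j| * |f j| ≤ |b i j| * ‖f‖ :=
              mul_le_mul_of_nonneg_left (abs_le_norm_bcf f j) (abs_nonneg _)
          _ = ‖f‖ * |b i j| := mul_comm _ _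
      · rw [hf j hjA]
        simp only [abs_zero, mul_zero]
        exact mul_nonneg (norm_nonneg f) (ind_nonneg i _ j)
  have hsum2 : Summable fun j => ‖f‖ * (A₁ \ {a}).indicator (fun j => |b i j|) j :=
    (summable_ind hsum i _).mul_left ‖f‖
  have hsum1 : Summable fun j => ‖(if j = a then 0 else b i j * f j)‖ :=
    Summable.of_nonneg_of_le (fun j => norm_nonneg _) hbound hsum2
  calc |∑' j, if j = a then 0 else b i j * f j|
      ≤ ∑' j, ‖(if j = a then 0 else b i j * f j)‖ := by
        rw [← Real.norm_eq_abs]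
        exact norm_tsum_le_tsum_norm hsum1
    _ ≤ ∑' j, ‖f‖ * (A₁ \ {a}).indicator (fun j => |b i j|) j :=
        Summable.tsum_le_tsum hbound hsum1 hsum2
    _ = ‖f‖ * tt b i (A₁ \ {a}) := by rw [tt, tsum_mul_left]

lemma abs_tsum_le_tt (hsum : ∀ i, Summable fun j => |b i j|) (i : ℕ) (S : Set ℕ) :
    |∑' j, b i j * (indF S) j| ≤ tt b i S := by
  have heq : ∀ j, ‖b i j * (indF S) j‖ = S.indicator (fun j => |b i j|) j := by
    intro j
    rw [Real.norm_eq_abs, indF_apply, abs_mul]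
    by_cases hj : j ∈ S <;> simp [Set.indicator_apply, hj]
  have hs1 : Summable fun j => ‖b i j * (indF S) j‖ := by
    apply Summable.congr (summable_ind hsum i S)
    intro j
    rw [heq j]
  calc |∑' j, b i j * (indF S) j| ≤ ∑' j, ‖b i j * (indF S) j‖ := by
        rw [← Real.norm_eq_abs]
        exact norm_tsum_le_tsum_norm hs1
    _ = tt b i S := by rw [tt]; exact tsum_congr heq

end Stmt12Aux

/-- Every matrix operator on `ℓ∞/c₀` which is an isomorphic embedding is
right-locally trivial. -/
theorem statement12 (T : ellInftyModCzero →L[ℝ] ellInftyModCzero)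
    (hmat : ∃ (R : ellInfty →L[ℝ] ellInfty) (b : ℕ → ℕ → ℝ), IsC0Matrix R b ∧
      ∀ f : ellInfty, czero.mkQ (R f) = T (czero.mkQ f))
    (hemb : ∃ M : ℝ, 0 < M ∧ ∀ x : ellInftyModCzero, M * ‖x‖ ≤ ‖T x‖) :
    RightLocallyTrivial T := by

  classical
  obtain ⟨R, b, hb, hcomp⟩ := hmat
  obtain ⟨M, hM, hMle⟩ := hemb
  obtain ⟨C, hC⟩ := hb.rows_bounded
  have hsum := hb.rows_summable
  have hcol := hb.cols_vanish
  intro A hA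
  have hmuA : M ≤ Stmt12Aux.mu b A := by
    apply le_csInf ⟨C, Stmt12Aux.C_mem_Dset hsum hC hA⟩
    rintro d ⟨S', hsub, hinf, N, hN⟩
    have hd0 : (0:ℝ) ≤ d := Stmt12Aux.Dset_nonneg ⟨S', hsub, hinf, N, hN⟩
    have hrf : ∀ i ≥ N, |R (Stmt12Aux.indF S') i| ≤ d := by
      intro i hi
      rw [hb.matrix_repr (Stmt12Aux.indF S') i]
      exact le_trans (Stmt12Aux.abs_tsum_le_tt hsum i S') (hN i hi)
    have h1 : ‖czero.mkQ (R (Stmt12Aux.indF S'))‖ ≤ d :=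
      Stmt12Aux.mkQ_norm_le _ hd0 N hrf
    have h2 : M * 1 ≤ M * ‖czero.mkQ (Stmt12Aux.indF S')‖ :=
      mul_le_mul_of_nonneg_left (Stmt12Aux.one_le_norm_indF hinf) (le_of_lt hM)
    have h3 := hMle (czero.mkQ (Stmt12Aux.indF S'))
    rw [← hcomp (Stmt12Aux.indF S')] at h3
    linarith
  set c := Stmt12Aux.chain b hsum hC hcol A hA with hcdef
  have spec := fun k => Stmt12Aux.chain_spec b hsum hC hcol A hA k
  set na : ℕ → ℕ := fun k => (c (k+1)).n with hna
  set aa : ℕ → ℕ := fun k => (c (k+1)).a with haa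
  have hSanti : Antitone (fun k => (c k).S) := antitone_nat_of_succ_le (fun k => (spec k).1)
  have hnmono : StrictMono (fun k => (c k).n) :=
    strictMono_nat_of_lt_succ (fun k => (spec k).2.2.2.1)
  have hnamono : StrictMono na := fun k l h => hnmono (Nat.succ_lt_succ h)
  have haS : ∀ k, aa k ∈ (c k).S := fun k => (spec k).2.1
  have haS' : ∀ k, aa k ∉ (c (k+1)).S := fun k => (spec k).2.2.1
  have hainj : Function.Injective aa := by
    have key : ∀ k l, k < l → aa k ≠ aa l := by
      intro k l hkl he
      have h1 : aa l ∈ (c (k+1)).S := hSanti (Nat.succ_le_of_lt hkl) (haS l)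
      rw [← he] at h1
      exact haS' k h1
    intro k l he
    rcases lt_trichotomy k l with h | h | h
    · exact absurd he (key k l h)
    · exact h
    · exact absurd he.symm (key l k h)
  have hF : ∀ k j, j ∈ (c k).F ↔ ∃ l, l < k ∧ aa l = j := by
    intro k
    induction k with
    | zero =>
      intro j
      have h0 : (c 0).F = ∅ := rfl
      simp [h0]
    | succ k ih =>
      intro j
      rw [(spec k).2.2.2.2.1]
      change j ∈ (c k).F ∪ {aa k} ↔ _
      simp only [Finset.mem_union, Finset.mem_singleton, ih j]
      constructor
      · rintro (⟨l, hl, rfl⟩ | rfl)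
        · exact ⟨l, by omega, rfl⟩
        · exact ⟨k, by omega, rfl⟩
      · rintro ⟨l, hl, rfl⟩
        rcases Nat.lt_succ_iff_lt_or_eq.mp hl with h | h
        · exact Or.inl ⟨l, h, rfl⟩
        · subst h; exact Or.inr rfl
  have hmumono : Monotone (fun k => Stmt12Aux.mu b (c k).S) :=
    monotone_nat_of_le_succ (fun k => Stmt12Aux.mu_mono hsum hC (c (k+1)).hS ((spec k).1))
  have hmubdd : BddAbove (Set.range fun k => Stmt12Aux.mu b (c k).S) := by
    refine ⟨C, ?_⟩
    rintro x ⟨k, rfl⟩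
    exact Stmt12Aux.mu_le_C hsum hC (c k).hS
  set μs := ⨆ k, Stmt12Aux.mu b (c k).S with hμs
  have hμtend : Tendsto (fun k => Stmt12Aux.mu b (c k).S) atTop (𝓝 μs) :=
    tendsto_atTop_ciSup hmumono hmubdd
  have hc0 : (c 0).S = A := rfl
  have hμM : M ≤ μs := by
    have h1 : Stmt12Aux.mu b (c 0).S ≤ μs := le_ciSup hmubdd 0
    rw [hc0] at h1
    linarith
  have hμpos : 0 < μs := lt_of_lt_of_le hM hμM
  have hblow : ∀ k, Stmt12Aux.mu b (c k).S - 3 * Stmt12Aux.eps k < |b (na k) (aa k)| :=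
    fun k => (spec k).2.2.2.2.2.1
  have hbup : ∀ k, |b (na k) (aa k)| ≤ Stmt12Aux.mu b (c k).S + Stmt12Aux.eps k :=
    fun k => (spec k).2.2.2.2.2.2.1
  have htail : ∀ k, Stmt12Aux.tt b (na k) (c (k+1)).S ≤ 4 * Stmt12Aux.eps k :=
    fun k => (spec k).2.2.2.2.2.2.2.1
  have hprevF : ∀ k, (∑ j ∈ (c k).F, |b (na k) j|) ≤ Stmt12Aux.eps k :=
    fun k => (spec k).2.2.2.2.2.2.2.2
  have habs : Tendsto (fun k => |b (na k) (aa k)|) atTop (𝓝 μs) := by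
    have hlow : Tendsto (fun k => Stmt12Aux.mu b (c k).S - 3 * Stmt12Aux.eps k)
        atTop (𝓝 μs) := by
      have := hμtend.sub ((Stmt12Aux.eps_tendsto).const_mul 3)
      simpa using this
    have hup : Tendsto (fun k => Stmt12Aux.mu b (c k).S + Stmt12Aux.eps k) atTop (𝓝 μs) := by
      have := hμtend.add Stmt12Aux.eps_tendsto
      simpa using this
    exact tendsto_of_tendsto_of_tendsto_of_le_of_le hlow hup
      (fun k => le_of_lt (hblow k)) hbup
  have hconv : Tendsto (fun k => |(|b (na k) (aa k)| - μs)|) atTop (𝓝 0) := by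
    have := (habs.sub_const μs).abs
    simpa using this
  obtain ⟨K, hKinf, r, hrabs, hrsign⟩ : ∃ K : Set ℕ, K.Infinite ∧ ∃ r : ℝ, |r| = μs ∧
      ∀ k ∈ K, |b (na k) (aa k) - r| = |(|b (na k) (aa k)| - μs)| := by
    by_cases hKpos : {k | 0 ≤ b (na k) (aa k)}.Infinite
    · refine ⟨_, hKpos, μs, abs_of_pos hμpos, fun k hk => ?_⟩
      have h0 : (0:ℝ) ≤ b (na k) (aa k) := hk
      rw [abs_of_nonneg h0]
    · have hfin := Set.not_infinite.mp hKpos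
      have hcomplinf : {k | ¬ 0 ≤ b (na k) (aa k)}.Infinite := by
        have := hfin.infinite_compl
        simpa [Set.compl_setOf] using this
      refine ⟨_, hcomplinf, -μs, by rw [abs_neg, abs_of_pos hμpos], fun k hk => ?_⟩
      have h0 : b (na k) (aa k) < 0 := lt_of_not_ge hk
      rw [abs_of_neg h0, sub_neg_eq_add]
      rw [show -b (na k) (aa k) - μs = -(b (na k) (aa k) + μs) by ring, abs_neg]
  have hr0 : r ≠ 0 := by
    intro h
    rw [h, abs_zero] at hrabs
    linarith
  have hσ : ∀ k ∈ K, aa (Function.invFunOn na K (na k)) = aa k := by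
    intro k hk
    have h1 : na (Function.invFunOn na K (na k)) = na k :=
      Function.invFunOn_eq ⟨k, hk, rfl⟩
    exact congrArg aa (hnamono.injective h1)
  refine ⟨aa '' K, ?_, ?_, na '' K, ?_, r, hr0,
    fun m => aa (Function.invFunOn na K m), ?_, ?_⟩
  · rintro x ⟨k, hk, rfl⟩
    rw [← hc0]
    exact hSanti (Nat.zero_le k) (haS k)
  · exact hKinf.image (hainj.injOn)
  · exact hKinf.image (hnamono.injective.injOn)
  · refine ⟨?_, ?_, ?_⟩
    · rintro m ⟨k, hk, rfl⟩
      exact ⟨k, hk, (hσ k hk).symm⟩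
    · rintro m1 ⟨k1, hk1, rfl⟩ m2 ⟨k2, hk2, rfl⟩ he
      have he' : aa (Function.invFunOn na K (na k1))
          = aa (Function.invFunOn na K (na k2)) := he
      rw [hσ k1 hk1, hσ k2 hk2] at he'
      rw [hainj he']
    · rintro x ⟨k, hk, rfl⟩
      exact ⟨na k, ⟨k, hk, rfl⟩, hσ k hk⟩
  · intro f hf g hg ε hε
    have hQ : czero.mkQ g = czero.mkQ (R f) := by rw [hg, ← hcomp]
    have hwmem : g - R f ∈ czero := by
      rw [Submodule.mkQ_apply, Submodule.mkQ_apply, Submodule.Quotient.eq] at hQ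
      simpa using hQ
    have hwt : Tendsto (fun m => g m - R f m) atTop (𝓝 (0:ℝ)) := by
      have h1 : Tendsto (⇑(g - R f)) atTop (𝓝 (0:ℝ)) := hwmem
      have h2 : ⇑(g - R f) = fun m => g m - R f m := by
        rw [BoundedContinuousFunction.coe_sub]; rfl
      rwa [h2] at h1
    have hwna : Tendsto (fun k => g (na k) - R f (na k)) atTop (𝓝 (0:ℝ)) :=
      hwt.comp hnamono.tendsto_atTop
    have hbound : ∀ k ∈ K, |g (na k) - r * f (aa k)|
        ≤ |g (na k) - R f (na k)| + ‖f‖ * (5 * Stmt12Aux.eps k)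
          + ‖f‖ * |(|b (na k) (aa k)| - μs)| := by
      intro k hk
      have e1 : |R f (na k) - b (na k) (aa k) * f (aa k)|
          ≤ ‖f‖ * Stmt12Aux.tt b (na k) ((aa '' K) \ {aa k}) := by
        rw [hb.matrix_repr f (na k)]
        exact Stmt12Aux.repr_err hsum (na k) (aa k) (aa '' K) f hf
      have e2 : Stmt12Aux.tt b (na k) ((aa '' K) \ {aa k}) ≤ 5 * Stmt12Aux.eps k := by
        have hsub2 : (aa '' K) \ {aa k} ⊆ (c (k+1)).S ∪ ↑((c k).F) := by
          rintro x ⟨⟨l, hl, rfl⟩, hne⟩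
          have hlk : l ≠ k := by
            intro h
            exact hne (by rw [h]; exact rfl)
          rcases lt_or_gt_of_ne hlk with h | h
          · right
            simp only [Finset.mem_coe]
            exact (hF k (aa l)).mpr ⟨l, h, rfl⟩
          · left
            exact hSanti (Nat.succ_le_of_lt h) (haS l)
        calc Stmt12Aux.tt b (na k) ((aa '' K) \ {aa k})
            ≤ Stmt12Aux.tt b (na k) ((c (k+1)).S ∪ ↑((c k).F)) :=
              Stmt12Aux.tt_mono hsum hsub2 (na k)
          _ ≤ Stmt12Aux.tt b (na k) (c (k+1)).S + Stmt12Aux.tt b (na k) ↑((c k).F) :=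
              Stmt12Aux.tt_union_le hsum (na k) _ _
          _ ≤ 4 * Stmt12Aux.eps k + Stmt12Aux.eps k := by
              apply add_le_add (htail k)
              rw [Stmt12Aux.tt_coe_finset]
              exact hprevF k
          _ = 5 * Stmt12Aux.eps k := by ring
      have e3 : |(b (na k) (aa k) - r) * f (aa k)|
          ≤ ‖f‖ * |(|b (na k) (aa k)| - μs)| := by
        rw [abs_mul, hrsign k hk]
        calc |(|b (na k) (aa k)| - μs)| * |f (aa k)|
            ≤ |(|b (na k) (aa k)| - μs)| * ‖f‖ :=
              mul_le_mul_of_nonneg_left (Stmt12Aux.abs_le_norm_bcf f (aa k)) (abs_nonneg _)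
          _ = ‖f‖ * |(|b (na k) (aa k)| - μs)| := mul_comm _ _
      have e1' : |R f (na k) - b (na k) (aa k) * f (aa k)|
          ≤ ‖f‖ * (5 * Stmt12Aux.eps k) :=
        le_trans e1 (mul_le_mul_of_nonneg_left e2 (norm_nonneg f))
      have decomp : g (na k) - r * f (aa k)
          = (g (na k) - R f (na k)) + (R f (na k) - b (na k) (aa k) * f (aa k))
            + ((b (na k) (aa k) - r) * f (aa k)) := by ring
      calc |g (na k) - r * f (aa k)|
          ≤ |(g (na k) - R f (na k)) + (R f (na k) - b (na k) (aa k) * f (aa k))|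
            + |(b (na k) (aa k) - r) * f (aa k)| := by rw [decomp]; exact abs_add_le _ _
        _ ≤ |g (na k) - R f (na k)| + |R f (na k) - b (na k) (aa k) * f (aa k)|
            + |(b (na k) (aa k) - r) * f (aa k)| := by
              have := abs_add_le (g (na k) - R f (na k))
                (R f (na k) - b (na k) (aa k) * f (aa k))
              linarith
        _ ≤ |g (na k) - R f (na k)| + ‖f‖ * (5 * Stmt12Aux.eps k)
            + ‖f‖ * |(|b (na k) (aa k)| - μs)| := by linarith [e1', e3]
    have htotal : Tendsto (fun k => |g (na k) - R f (na k)| + ‖f‖ * (5 * Stmt12Aux.eps k)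
        + ‖f‖ * |(|b (na k) (aa k)| - μs)|) atTop (𝓝 0) := by
      have t1 : Tendsto (fun k => |g (na k) - R f (na k)|) atTop (𝓝 (0:ℝ)) := by
        have := hwna.abs
        simpa using this
      have t2 : Tendsto (fun k => ‖f‖ * (5 * Stmt12Aux.eps k)) atTop (𝓝 (0:ℝ)) := by
        have := Stmt12Aux.eps_tendsto.const_mul (‖f‖ * 5)
        simpa [mul_assoc] using this
      have t3 : Tendsto (fun k => ‖f‖ * |(|b (na k) (aa k)| - μs)|) atTop (𝓝 (0:ℝ)) := by
        have := hconv.const_mul ‖f‖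
        simpa using this
      have := (t1.add t2).add t3
      simpa using this
    obtain ⟨K₀, hK₀⟩ := eventually_atTop.mp (htotal.eventually (eventually_lt_nhds hε))
    apply Set.Finite.subset ((Set.finite_Iio K₀).image na)
    rintro m ⟨⟨k, hk, rfl⟩, hεle⟩
    refine ⟨k, ?_, rfl⟩
    by_contra hcon
    simp only [Set.mem_Iio, not_lt] at hcon
    have h1 := hbound k hk
    have h2 := hK₀ k hcon
    have hεle' : ε ≤ |g (na k) - r * f (aa (Function.invFunOn na K (na k)))| := hεle
    rw [hσ k hk] at hεle'
    linarith
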